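/- For each ℓ ∈ Z, the restriction of φ to the eigenspace E^{(ℓ)} = ⊕_{|α|=j+ℓ} M y^α ∂_ξ^j δ_g ⊆ M_g is a bijection onto Γ_+(M), and it intertwines the operators s on both sides up to shift: φ ∘ s = (s − ℓ) ∘ φ on E^{(ℓ)}, where on M_g, s = −∂_ξ ξ, and on Γ_+(M), s = −Σ_{i=1}^r ∂_{t_i} t_i. -/

import Mathlib

/-- For each `ℓ ∈ ℤ`, the restriction of
`φ : M_g → Γ_+(M)`, `m y^α ∂_ξ^j δ_g ↦ (−1)^{|α|+j} m ∂_t^α δ_f`, to the eigenspace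
`E^{(ℓ)} = ⊕_{|α| = j+ℓ} M y^α ∂_ξ^j δ_g` is a bijection onto `Γ_+(M)`, and it
intertwines `s` up to shift: `φ ∘ s = (s − ℓ) ∘ φ` on `E^{(ℓ)}`, where `s = −∂_ξ ξ` on
`M_g` and `s = −Σ ∂_{t_i} t_i` on `Γ_+(M)`. -/
theorem stmt8 (r : ℕ) (M : Type*) [AddCommGroup M] [Module ℂ M]
    (f : Fin r → Module.End ℂ M)
    (Dξ Ξ : Module.End ℂ (((Fin r →₀ ℕ) × ℤ) →₀ M))
    (T DT : Fin r → Module.End ℂ ((Fin r →₀ ℕ) →₀ M))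
    (hDξ : ∀ (α : Fin r →₀ ℕ) (j : ℤ) (m : M),
      Dξ (Finsupp.single (α, j) m) = Finsupp.single (α, j + 1) m)
    (hΞ : ∀ (α : Fin r →₀ ℕ) (j : ℤ) (m : M),
      Ξ (Finsupp.single (α, j) m) =
        (∑ i : Fin r, Finsupp.single (α + Finsupp.single i 1, j) (f i m)) -
          (j : ℂ) • Finsupp.single (α, j - 1) m)
    (hT : ∀ (i : Fin r) (α : Fin r →₀ ℕ) (m : M),
      T i (Finsupp.single α m) =
        Finsupp.single α (f i m) - (α i : ℂ) • Finsupp.single (α - Finsupp.single i 1) m)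
    (hDT : ∀ (i : Fin r) (α : Fin r →₀ ℕ) (m : M),
      DT i (Finsupp.single α m) = Finsupp.single (α + Finsupp.single i 1) m)
    (φ : (((Fin r →₀ ℕ) × ℤ) →₀ M) →ₗ[ℂ] ((Fin r →₀ ℕ) →₀ M))
    (hφ : ∀ (α : Fin r →₀ ℕ) (j : ℤ) (m : M),
      φ (Finsupp.single (α, j) m) =
        ((-1 : ℂ) ^ ((∑ i, (α i : ℤ)) + j)) • Finsupp.single α m)
    (E : ℤ → Submodule ℂ (((Fin r →₀ ℕ) × ℤ) →₀ M))
    (hE : ∀ ℓ : ℤ, E ℓ = Finsupp.supported M ℂ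
      {p : (Fin r →₀ ℕ) × ℤ | (∑ i, (p.1 i : ℤ)) = p.2 + ℓ})
    (sMg : Module.End ℂ (((Fin r →₀ ℕ) × ℤ) →₀ M)) (hsMg : sMg = -(Dξ * Ξ))
    (sΓ : Module.End ℂ ((Fin r →₀ ℕ) →₀ M)) (hsΓ : sΓ = -(∑ i, DT i * T i)) :
    ∀ ℓ : ℤ,
      Function.Bijective ⇑(φ ∘ₗ (E ℓ).subtype) ∧
      ∀ u ∈ E ℓ, φ (sMg u) = sΓ (φ u) - (ℓ : ℂ) • φ u := by
  classical
  intro l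
  -- notation
  set S : (Fin r →₀ ℕ) → ℤ := fun α => ∑ i, (α i : ℤ) with hS
  have hsq : ∀ k : ℤ, (-1 : ℂ) ^ k * (-1 : ℂ) ^ k = 1 := by
    intro k
    rw [← zpow_add₀ (by norm_num : (-1 : ℂ) ≠ 0), ← two_mul, zpow_mul]
    norm_num
  have hSdef : ∀ β : Fin r →₀ ℕ, (∑ i, (β i : ℤ)) = S β := fun _ => rfl
  have hSe : ∀ (α : Fin r →₀ ℕ) (i : Fin r),
      S (α + Finsupp.single i 1) = S α + 1 := by
    intro α i
    simp only [hS, Finsupp.add_apply, Nat.cast_add, Finset.sum_add_distrib]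
    congr 1
    simp [Finsupp.single_apply, Finset.sum_ite_eq]
  -- induction principle for members of E l
  have mem_induction : ∀ (P : (((Fin r →₀ ℕ) × ℤ) →₀ M) → Prop), P 0 →
      (∀ (α : Fin r →₀ ℕ) (j : ℤ) (m : M), S α = j + l →
        P (Finsupp.single (α, j) m)) →
      (∀ x y, P x → P y → P (x + y)) →
      ∀ u ∈ E l, P u := by
    intro P h0 hsingle hadd u hu
    rw [hE, Finsupp.mem_supported] at hu
    revert hu
    induction u using Finsupp.induction with
    | zero => intro _; exact h0
    | single_add p m v hp hm ih =>
      intro hu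
      have hpmem : p ∈ (Finsupp.single p m + v).support := by
        rw [Finsupp.mem_support_iff, Finsupp.add_apply, Finsupp.single_eq_same,
          Finsupp.notMem_support_iff.mp hp, add_zero]
        exact hm
      have hp1 : S p.1 = p.2 + l := hu hpmem
      have hvsub : ↑v.support ⊆ {p : (Fin r →₀ ℕ) × ℤ | (∑ i, (p.1 i : ℤ)) = p.2 + l} := by
        intro q hq
        apply hu
        have hqv : q ∈ v.support := hq
        have hqp : q ≠ p := fun h => hp (h ▸ hqv)
        rw [Finset.mem_coe, Finsupp.mem_support_iff, Finsupp.add_apply,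
          Finsupp.single_eq_of_ne hqp]
        simpa using Finsupp.mem_support_iff.mp hqv
      exact hadd _ _ (hsingle p.1 p.2 m hp1) (ih hvsub)
  -- inverse map
  set ψ : ((Fin r →₀ ℕ) →₀ M) →ₗ[ℂ] (((Fin r →₀ ℕ) × ℤ) →₀ M) :=
    Finsupp.lsum ℂ (fun α => ((-1 : ℂ) ^ (S α + (S α - l))) • Finsupp.lsingle (α, S α - l))
    with hψ
  have hψs : ∀ (α : Fin r →₀ ℕ) (m : M), ψ (Finsupp.single α m) =
      ((-1 : ℂ) ^ (S α + (S α - l))) • Finsupp.single (α, S α - l) m := by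
    intro α m
    simp [hψ, Finsupp.lsum_single]
  have memψ : ∀ y, ψ y ∈ E l := by
    intro y
    induction y using Finsupp.induction_linear with
    | zero => simp
    | add x y hx hy => rw [map_add]; exact (E l).add_mem hx hy
    | single α m =>
      rw [hψs, hE, Finsupp.mem_supported]
      refine subset_trans (Finsupp.support_smul) (subset_trans
        (Finsupp.support_single_subset) ?_)
      intro q hq
      rcases Finset.mem_singleton.mp hq with rfl
      show (∑ i, (α i : ℤ)) = (S α - l) + l
      rw [hSdef α]; ring
  have hψφ : ∀ u ∈ E l, ψ (φ u) = u := by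
    refine mem_induction _ (by simp) ?_ ?_
    · intro α j m hα
      rw [hφ, map_smul, hψs, hSdef α]
      have hj : S α - l = j := by rw [hα]; ring
      rw [hj, smul_smul, hsq, one_smul]
    · intro x y hx hy
      rw [map_add, map_add, hx, hy]
  have hφψ : ∀ y, φ (ψ y) = y := by
    intro y
    induction y using Finsupp.induction_linear with
    | zero => simp
    | add x y hx hy => rw [map_add, map_add, hx, hy]
    | single α m =>
      rw [hψs, map_smul, hφ, hSdef α, smul_smul, hsq, one_smul]
  constructor
  · rw [Function.bijective_iff_has_inverse]
    refine ⟨fun y => ⟨ψ y, memψ y⟩, ?_, ?_⟩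
    · intro u
      apply Subtype.ext
      exact hψφ u.1 u.2
    · intro y
      exact hφψ y
  · -- intertwining
    refine mem_induction _ (by simp) ?_ ?_
    · intro α j m hα
      -- compute LHS
      have hcancel : ∀ i : Fin r, (α i : ℂ) •
          Finsupp.single ((α - Finsupp.single i 1) + Finsupp.single i 1) m =
          (α i : ℂ) • Finsupp.single α m := by
        intro i
        rcases Nat.eq_zero_or_pos (α i) with h | h
        · simp [h]
        · have : α - Finsupp.single i 1 + Finsupp.single i 1 = α :=
            tsub_add_cancel_of_le (Finsupp.single_le_iff.mpr h)
          rw [this]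
      have eΞ : (Dξ * Ξ) (Finsupp.single (α, j) m) =
          (∑ i : Fin r, Finsupp.single (α + Finsupp.single i 1, j + 1) (f i m)) -
            (j : ℂ) • Finsupp.single (α, j) m := by
        rw [Module.End.mul_apply, hΞ, map_sub, map_sum, map_smul]
        congr 1
        · exact Finset.sum_congr rfl fun i _ => hDξ _ _ _
        · rw [hDξ, sub_add_cancel]
      have hsigni : ∀ i : Fin r,
          (-1 : ℂ) ^ (S (α + Finsupp.single i 1) + (j + 1)) = (-1 : ℂ) ^ (S α + j) := by
        intro i
        rw [hSe α i, show S α + 1 + (j + 1) = (S α + j) + 2 by ring,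
          zpow_add₀ (by norm_num : (-1 : ℂ) ≠ 0)]
        norm_num
      have eLHS : φ (sMg (Finsupp.single (α, j) m)) =
          -((-1 : ℂ) ^ (S α + j) •
              ∑ i : Fin r, Finsupp.single (α + Finsupp.single i 1) (f i m)) +
            (j : ℂ) • ((-1 : ℂ) ^ (S α + j) • Finsupp.single α m) := by
        have hsum : ∀ i : Fin r,
            φ (Finsupp.single (α + Finsupp.single i 1, j + 1) (f i m)) =
            (-1 : ℂ) ^ (S α + j) • Finsupp.single (α + Finsupp.single i 1) (f i m) := by
          intro i
          rw [hφ, hSdef (α + Finsupp.single i 1), hsigni i]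
        rw [hsMg, LinearMap.neg_apply, eΞ, map_neg, map_sub, map_sum, map_smul,
          Finset.sum_congr rfl fun i _ => hsum i, hφ, hSdef α, Finset.smul_sum]
        abel
      -- compute sΓ on single
      have eΓ : sΓ (Finsupp.single α m) =
          -(∑ i : Fin r, Finsupp.single (α + Finsupp.single i 1) (f i m)) +
            ((S α : ℂ)) • Finsupp.single α m := by
        rw [hsΓ, LinearMap.neg_apply, LinearMap.sum_apply]
        have : ∀ i : Fin r, (DT i * T i) (Finsupp.single α m) =
            Finsupp.single (α + Finsupp.single i 1) (f i m) -
              (α i : ℂ) • Finsupp.single α m := by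
          intro i
          rw [Module.End.mul_apply, hT, map_sub, map_smul, hDT, hDT, hcancel i]
        rw [Finset.sum_congr rfl fun i _ => this i, Finset.sum_sub_distrib, neg_sub,
          ← Finset.sum_smul]
        have hc : (∑ i : Fin r, (α i : ℂ)) = ((S α : ℤ) : ℂ) := by
          rw [← hSdef α]; push_cast; ring
        rw [hc]
        abel
      rw [eLHS, hφ, hSdef α, map_smul, eΓ]
      have hj : ((S α : ℤ) : ℂ) = (j : ℂ) + (l : ℂ) := by
        rw [hα]; push_cast; ring
      rw [hj]
      module
    · intro x y hx hy
      simp only [map_add, smul_add, hx, hy]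
      abel
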